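/- arXiv:1801.01359 — 4 statements merged into one kernel-verified Lean document; each statement's English description precedes it below -/
import Mathlib

section
/- (Proposition 2.1.) For every nonempty u ⊆ {1,…,p}, the total Sobol' index equals the squared relative L² error of the best approximation of f − f₀ by a function not depending on x_u: T_u = ‖(f − f₀) − (E[f | σ(x_{∼u})] − f₀)‖₂² / ‖f − f₀‖₂² = ‖f − E[f | σ(x_{∼u})]‖₂² / ‖f − f₀‖₂². -/
open MeasureTheory ProbabilityTheory

/-- The sub-σ-algebra generated by the coordinates in `v`. -/
def coordSigma {p : ℕ} (Ω : Fin p → Type*) [∀ i, MeasurableSpace (Ω i)]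
    (v : Finset (Fin p)) : MeasurableSpace (∀ i, Ω i) :=
  ⨆ i ∈ v, MeasurableSpace.comap (fun x : ∀ j, Ω j => x i) inferInstance

/-- The recursively defined (generalized ANOVA) components `f_v`. -/
noncomputable def anovaComp {p : ℕ} {Ω : Fin p → Type*} [∀ i, MeasurableSpace (Ω i)]
    (μ : Measure (∀ i, Ω i)) (f : (∀ i, Ω i) → ℝ) : Finset (Fin p) → (∀ i, Ω i) → ℝ
  | v =>
    if v = ∅ then fun _ => ∫ x, f x ∂μ
    else μ[f | coordSigma Ω v] - ∑ w ∈ v.ssubsets.attach, anovaComp μ f w.1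
  termination_by v => v.card
  decreasing_by exact Finset.card_lt_card (Finset.mem_ssubsets.mp w.2)

/-- Variance (`‖f - f₀‖₂²`). -/
noncomputable def fVar {α : Type*} [MeasurableSpace α] (μ : Measure α) (f : α → ℝ) : ℝ :=
  ∫ x, (f x - ∫ y, f y ∂μ) ^ 2 ∂μ

/-- Covariance. -/
noncomputable def fCov {α : Type*} [MeasurableSpace α] (μ : Measure α) (g f : α → ℝ) : ℝ :=
  ∫ x, (g x - ∫ y, g y ∂μ) * (f x - ∫ y, f y ∂μ) ∂μ

/-- Sobol' index `S_v`. -/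
noncomputable def sobolIndex {p : ℕ} {Ω : Fin p → Type*} [∀ i, MeasurableSpace (Ω i)]
    (μ : Measure (∀ i, Ω i)) (f : (∀ i, Ω i) → ℝ) (v : Finset (Fin p)) : ℝ :=
  fCov μ (anovaComp μ f v) f / fVar μ f

/-- Total Sobol' index `T_u`. -/
noncomputable def totalSobolIndex {p : ℕ} {Ω : Fin p → Type*} [∀ i, MeasurableSpace (Ω i)]
    (μ : Measure (∀ i, Ω i)) (f : (∀ i, Ω i) → ℝ) (u : Finset (Fin p)) : ℝ :=
  ∑ v ∈ Finset.univ.powerset.filter (fun v => (v ∩ u).Nonempty), sobolIndex μ f v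

section Aux

variable {α : Type*} {m m0 : MeasurableSpace α} {μ : Measure α}

/-- The product of two `L²` functions is integrable. -/
lemma integrable_mul₂ {f g : α → ℝ} (hg : MemLp g 2 μ) (hf : MemLp f 2 μ) :
    Integrable (fun x => g x * f x) μ := by
  have h1 : Integrable (fun x => (g x + f x) ^ 2) μ := (hg.add hf).integrable_sq
  have h2 := hg.integrable_sq
  have h3 := hf.integrable_sq
  have : (fun x => g x * f x) = fun x => ((g x + f x) ^ 2 - (g x) ^ 2 - (f x) ^ 2) / 2 := by
    funext x; ring
  rw [this]
  exact ((h1.sub h2).sub h3).div_const 2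

/-- The conditional expectation of an `L²` function is in `L²`. -/
lemma memℒp_two_condexp (hm : m ≤ m0) {μ : Measure α} [IsProbabilityMeasure μ] {f : α → ℝ}
    (hf : MemLp f 2 μ) : MemLp (μ[f|m]) 2 μ := by
  set g : Lp ℝ 2 μ := (condExpL2 ℝ ℝ hm (hf.toLp f) : Lp ℝ 2 μ) with hgdef
  refine (Lp.memLp g).ae_eq ?_
  refine ae_eq_condExp_of_forall_setIntegral_eq hm (hf.integrable one_le_two)
    (fun s _ _ => ((Lp.memLp g).integrable one_le_two).integrableOn)
    (fun s hs hμs => ?_) ?_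
  · have h1 : ∫ x in s, (g : α → ℝ) x ∂μ = ∫ x in s, (hf.toLp f : α → ℝ) x ∂μ :=
      integral_condExpL2_eq hm (hf.toLp f) hs hμs.ne
    rw [h1]
    exact setIntegral_congr_ae (hm s hs) (hf.coeFn_toLp.mono fun x hx _ => hx)
  · exact lpMeas.aestronglyMeasurable (condExpL2 ℝ ℝ hm (hf.toLp f))

/-- Orthogonality: `∫ E[f|m]·f = ∫ E[f|m]²`. -/
lemma integral_condexp_mul_self (hm : m ≤ m0) [IsProbabilityMeasure μ] {f : α → ℝ}
    (hf : MemLp f 2 μ) :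
    ∫ x, (μ[f|m]) x * f x ∂μ = ∫ x, ((μ[f|m]) x) * (μ[f|m]) x ∂μ := by
  have hg2 : MemLp (μ[f|m]) 2 μ := memℒp_two_condexp hm hf
  have hint : Integrable (μ[f|m] * f) μ := integrable_mul₂ hg2 hf
  have h2 : μ[(μ[f|m] * f)|m] =ᵐ[μ] μ[f|m] * μ[f|m] :=
    condExp_mul_of_stronglyMeasurable_left stronglyMeasurable_condExp hint (hf.integrable one_le_two)
  calc ∫ x, (μ[f|m]) x * f x ∂μ = ∫ x, (μ[f|m] * f) x ∂μ := rfl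
    _ = ∫ x, (μ[(μ[f|m] * f)|m]) x ∂μ := (integral_condExp hm).symm
    _ = ∫ x, (μ[f|m] * μ[f|m]) x ∂μ := integral_congr_ae h2
    _ = ∫ x, ((μ[f|m]) x) * (μ[f|m]) x ∂μ := rfl

lemma fCov_eq [IsProbabilityMeasure μ] {g f : α → ℝ} (hg : MemLp g 2 μ) (hf : MemLp f 2 μ) :
    fCov μ g f = ∫ x, g x * (f x - ∫ y, f y ∂μ) ∂μ := by
  set a := ∫ y, f y ∂μ
  set b := ∫ y, g y ∂μ
  have h1 : Integrable (fun x => g x * (f x - a)) μ :=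
    integrable_mul₂ hg (hf.sub (memLp_const a))
  have h2 : Integrable (fun x => b * (f x - a)) μ :=
    ((hf.integrable one_le_two).sub (integrable_const a)).const_mul b
  have hz : ∫ x, f x - a ∂μ = 0 := by
    rw [integral_sub (hf.integrable one_le_two) (integrable_const a), integral_const]
    simp [a]
  calc fCov μ g f = ∫ x, (g x * (f x - a) - b * (f x - a)) ∂μ := by
        unfold fCov; congr 1; funext x; ring
    _ = (∫ x, g x * (f x - a) ∂μ) - ∫ x, b * (f x - a) ∂μ := integral_sub h1 h2
    _ = ∫ x, g x * (f x - a) ∂μ := by rw [integral_const_mul, hz, mul_zero, sub_zero]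

lemma fCov_sum [IsProbabilityMeasure μ] {ι : Type*} (s : Finset ι) (g : ι → α → ℝ) {f : α → ℝ}
    (hg : ∀ i ∈ s, MemLp (g i) 2 μ) (hf : MemLp f 2 μ) :
    fCov μ (fun x => ∑ i ∈ s, g i x) f = ∑ i ∈ s, fCov μ (g i) f := by
  set a := ∫ y, f y ∂μ
  have hfa : MemLp (fun x => f x - a) 2 μ := hf.sub (memLp_const a)
  rw [fCov_eq (memLp_finsetSum s hg) hf]
  have : ∀ i ∈ s, fCov μ (g i) f = ∫ x, g i x * (f x - a) ∂μ := fun i hi =>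
    fCov_eq (hg i hi) hf
  rw [Finset.sum_congr rfl this]
  rw [← integral_finset_sum s (fun i hi => integrable_mul₂ (hg i hi) hfa)]
  congr 1; funext x; rw [Finset.sum_mul]

end Aux

section ANOVA

variable {p : ℕ} {Ω : Fin p → Type*} [∀ i, MeasurableSpace (Ω i)]

lemma coordSigma_le (v : Finset (Fin p)) :
    coordSigma Ω v ≤ (inferInstance : MeasurableSpace (∀ i, Ω i)) := by
  refine iSup_le fun i => iSup_le fun _ => ?_
  exact (measurable_pi_apply i).comap_le

lemma coordSigma_empty : coordSigma Ω (∅ : Finset (Fin p)) = ⊥ := by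
  simp [coordSigma]

lemma coordSigma_univ :
    coordSigma Ω (Finset.univ : Finset (Fin p)) = (inferInstance : MeasurableSpace (∀ i, Ω i)) := by
  show _ = MeasurableSpace.pi
  rw [MeasurableSpace.pi]
  simp [coordSigma]

lemma powerset_eq_insert_ssubsets {v : Finset (Fin p)} :
    v.powerset = insert v v.ssubsets := by
  rw [Finset.ssubsets, Finset.insert_erase (Finset.mem_powerset_self v)]

/-- Telescoping: the components `f_w` over subsets of `v` sum to `E[f | σ(x_v)]`. -/
lemma sum_anovaComp (μ : Measure (∀ i, Ω i)) [IsProbabilityMeasure μ] (f : (∀ i, Ω i) → ℝ)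
    (v : Finset (Fin p)) :
    ∑ w ∈ v.powerset, anovaComp μ f w = μ[f | coordSigma Ω v] := by
  by_cases hv : v = ∅
  · subst hv
    rw [coordSigma_empty, condExp_bot, Finset.powerset_empty, Finset.sum_singleton,
      anovaComp, if_pos rfl]
  · rw [powerset_eq_insert_ssubsets,
      Finset.sum_insert (fun h => (Finset.mem_ssubsets.mp h).ne rfl)]
    rw [anovaComp, if_neg hv]
    rw [Finset.sum_attach v.ssubsets (anovaComp μ f)]
    exact sub_add_cancel _ _

lemma anovaComp_memℒp (μ : Measure (∀ i, Ω i)) [IsProbabilityMeasure μ] {f : (∀ i, Ω i) → ℝ}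
    (hf : MemLp f 2 μ) (v : Finset (Fin p)) : MemLp (anovaComp μ f v) 2 μ := by
  induction v using Finset.strongInduction with
  | _ v ih =>
    by_cases hv : v = ∅
    · subst hv; rw [anovaComp, if_pos rfl]; exact memLp_const _
    · rw [anovaComp, if_neg hv]
      refine MemLp.sub (memℒp_two_condexp (coordSigma_le v) hf) ?_
      exact memLp_finsetSum' _ (fun w _ => ih w.1 (Finset.mem_ssubsets.mp w.2))

end ANOVA

/-- Proposition 2.1: the total Sobol' index equals the squared relative L² error of the
best approximation of `f - f₀` by a function not depending on `x_u`. -/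
theorem totalSobolIndex_eq_approximation_error
    {p : ℕ} (hp : 1 ≤ p) (Ω : Fin p → Type*) [∀ i, MeasurableSpace (Ω i)]
    (μ : Measure (∀ i, Ω i)) [IsProbabilityMeasure μ]
    (f : (∀ i, Ω i) → ℝ) (hf : MemLp f 2 μ)
    (hvar : 0 < fVar μ f)
    (u : Finset (Fin p)) (hu : u.Nonempty) :
    totalSobolIndex μ f u =
      (∫ x, ((f x - ∫ y, f y ∂μ) - ((μ[f | coordSigma Ω uᶜ]) x - ∫ y, f y ∂μ)) ^ 2 ∂μ)
        / fVar μ f ∧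
    totalSobolIndex μ f u =
      (∫ x, (f x - (μ[f | coordSigma Ω uᶜ]) x) ^ 2 ∂μ) / fVar μ f := by
  classical
  have hm : coordSigma Ω uᶜ ≤ (inferInstance : MeasurableSpace (∀ i, Ω i)) := coordSigma_le uᶜ
  set g := μ[f | coordSigma Ω uᶜ] with hgdef
  set a := ∫ y, f y ∂μ with ha
  have hg2 : MemLp g 2 μ := memℒp_two_condexp hm hf
  -- sum over a powerset is the covariance of the conditional expectation
  have hpow : ∀ w : Finset (Fin p), (∑ v ∈ w.powerset, fCov μ (anovaComp μ f v) f)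
      = fCov μ (μ[f | coordSigma Ω w]) f := by
    intro w
    rw [← fCov_sum w.powerset (fun v => anovaComp μ f v)
      (fun v _ => anovaComp_memℒp μ hf v) hf]
    congr 1
    funext x
    rw [← Finset.sum_apply, sum_anovaComp μ f w]
  -- the complement of the filter
  have hcompl : Finset.univ.powerset.filter (fun v => ¬(v ∩ u).Nonempty) = uᶜ.powerset := by
    ext v
    simp only [Finset.mem_filter, Finset.mem_powerset, Finset.not_nonempty_iff_eq_empty,
      Finset.eq_empty_iff_forall_notMem, Finset.mem_inter, Finset.subset_iff, Finset.mem_compl,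
      Finset.mem_univ]
    tauto
  have hsplit : (∑ v ∈ Finset.univ.powerset.filter (fun v => (v ∩ u).Nonempty),
      fCov μ (anovaComp μ f v) f)
      = fCov μ (μ[f | coordSigma Ω (Finset.univ : Finset (Fin p))]) f - fCov μ g f := by
    have h := Finset.sum_filter_add_sum_filter_not Finset.univ.powerset
      (fun v => (v ∩ u).Nonempty) (fun v => fCov μ (anovaComp μ f v) f)
    rw [hcompl, hpow Finset.univ, hpow uᶜ, ← hgdef] at h
    linarith [h]
  -- conditional expectation w.r.t. the full σ-algebra is a.e. `f`
  have hfeq : μ[f | coordSigma Ω (Finset.univ : Finset (Fin p))] =ᵐ[μ] f := by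
    rw [coordSigma_univ]
    exact condExp_of_aestronglyMeasurable' le_rfl
      ⟨hf.1.mk f, hf.1.stronglyMeasurable_mk, hf.1.ae_eq_mk⟩ (hf.integrable one_le_two)
  have horth : ∫ x, g x * f x ∂μ = ∫ x, g x * g x ∂μ := integral_condexp_mul_self hm hf
  have hig : ∫ x, g x ∂μ = a := integral_condExp hm
  have hcovg : fCov μ g f = (∫ x, g x * g x ∂μ) - a * a := by
    rw [fCov_eq hg2 hf, ← ha]
    calc ∫ x, g x * (f x - a) ∂μ = ∫ x, (g x * f x - a * g x) ∂μ := by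
          congr 1; funext x; ring
      _ = (∫ x, g x * f x ∂μ) - ∫ x, a * g x ∂μ :=
          integral_sub (integrable_mul₂ hg2 hf) (integrable_condExp.const_mul a)
      _ = (∫ x, g x * g x ∂μ) - a * a := by rw [horth, integral_const_mul, hig]
  have hcovf : fCov μ (μ[f | coordSigma Ω (Finset.univ : Finset (Fin p))]) f
      = (∫ x, f x * f x ∂μ) - a * a := by
    rw [fCov_eq (memℒp_two_condexp (coordSigma_le _) hf) hf, ← ha]
    have heq0 : ∫ x, (μ[f | coordSigma Ω (Finset.univ : Finset (Fin p))]) x * (f x - a) ∂μ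
        = ∫ x, f x * (f x - a) ∂μ :=
      integral_congr_ae (hfeq.mono fun x hx => by dsimp only; rw [hx])
    rw [heq0]
    calc ∫ x, f x * (f x - a) ∂μ = ∫ x, (f x * f x - a * f x) ∂μ := by
          congr 1; funext x; ring
      _ = (∫ x, f x * f x ∂μ) - ∫ x, a * f x ∂μ :=
          integral_sub (integrable_mul₂ hf hf) ((hf.integrable one_le_two).const_mul a)
      _ = (∫ x, f x * f x ∂μ) - a * a := by rw [integral_const_mul, ← ha]
  have hnum : ∫ x, (f x - g x) ^ 2 ∂μ = (∫ x, f x * f x ∂μ) - ∫ x, g x * g x ∂μ := by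
    calc ∫ x, (f x - g x) ^ 2 ∂μ
        = ∫ x, (f x * f x - 2 * (g x * f x) + g x * g x) ∂μ := by
          congr 1; funext x; ring
      _ = (∫ x, (f x * f x - 2 * (g x * f x)) ∂μ) + ∫ x, g x * g x ∂μ :=
          integral_add ((integrable_mul₂ hf hf).sub ((integrable_mul₂ hg2 hf).const_mul 2))
            (integrable_mul₂ hg2 hg2)
      _ = (∫ x, f x * f x ∂μ) - 2 * (∫ x, g x * f x ∂μ) + ∫ x, g x * g x ∂μ := by
          rw [integral_sub (integrable_mul₂ hf hf) ((integrable_mul₂ hg2 hf).const_mul 2),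
            integral_const_mul]
      _ = (∫ x, f x * f x ∂μ) - ∫ x, g x * g x ∂μ := by rw [horth]; ring
  have hmain : totalSobolIndex μ f u = (∫ x, (f x - g x) ^ 2 ∂μ) / fVar μ f := by
    rw [totalSobolIndex]
    unfold sobolIndex
    rw [← Finset.sum_div, hsplit, hcovf, hcovg, hnum]
    congr 1
    ring
  refine ⟨?_, hmain⟩
  have : (fun x => ((f x - a) - (g x - a)) ^ 2) = fun x => (f x - g x) ^ 2 := by
    funext x; ring
  rw [hmain, this]
end

section
/- (Proposition 3.2.) Let u ⊆ {1,…,p} be nonempty and g : Ω_{∼u} → Ω_u measurable with G(x) = (g(x_{∼u}), x_{∼u}) and f∘G ∈ L²(μ). Let r = f − (a fixed measurable version, depending only on x_{∼u}, of E[f | σ(x_{∼u})]), so that T_u = ‖r‖₂²/‖f − f₀‖₂², and assume ‖r‖₂ > 0. Then the relative error δ_u = ‖f − f∘G‖₂²/‖f − f₀‖₂² satisfies δ_u ≤ T_u + ‖r∘G‖₂²/‖f − f₀‖₂² + 2 T_u ‖r∘G‖₂/‖r‖₂. -/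
open MeasureTheory ProbabilityTheory

/-- The map `G(x) = (g(x_{∼u}), x_{∼u})`: the coordinates in `u` are replaced by
`g` applied to the remaining coordinates. -/
def replaceCoords {p : ℕ} {Ω : Fin p → Type*} (u : Finset (Fin p))
    (g : (∀ i : {i : Fin p // i ∈ uᶜ}, Ω i) → ∀ i : {i : Fin p // i ∈ u}, Ω i)
    (x : ∀ i, Ω i) : ∀ i, Ω i :=
  fun i => if h : i ∈ u then g (fun j => x j) ⟨i, h⟩ else x i


lemma l2_sub_sq_le {α : Type*} [MeasurableSpace α] {μ : Measure α} {a b : α → ℝ}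
    (ha : MemLp a 2 μ) (hb : MemLp b 2 μ) :
    ∫ x, (a x - b x) ^ 2 ∂μ ≤ ∫ x, a x ^ 2 ∂μ + ∫ x, b x ^ 2 ∂μ
      + 2 * Real.sqrt (∫ x, a x ^ 2 ∂μ) * Real.sqrt (∫ x, b x ^ 2 ∂μ) := by
  have ha2 := ha.integrable_sq
  have hb2 := hb.integrable_sq
  have hab : Integrable (fun x => a x * b x) μ := by
    refine Integrable.mono' ((ha2.add hb2).div_const 2) (ha.1.mul hb.1) ?_
    refine Filter.Eventually.of_forall fun x => ?_
    simp only [Pi.add_apply]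
    rw [Real.norm_eq_abs, abs_mul]
    nlinarith [sq_nonneg (|a x| - |b x|), abs_nonneg (a x), abs_nonneg (b x),
      sq_abs (a x), sq_abs (b x)]
  have expand : ∀ x, (a x - b x) ^ 2 = a x ^ 2 + b x ^ 2 - 2 * (a x * b x) := by
    intro x; ring
  have hCS : ∫ x, |a x| * |b x| ∂μ ≤
      Real.sqrt (∫ x, a x ^ 2 ∂μ) * Real.sqrt (∫ x, b x ^ 2 ∂μ) := by
    have hpq : Real.HolderConjugate 2 2 := Real.holderConjugate_iff.mpr ⟨one_lt_two, by norm_num⟩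
    have h2 : (ENNReal.ofReal (2:ℝ)) = 2 := by simp [ENNReal.ofReal_ofNat]
    have haL : MemLp (fun x => |a x|) (ENNReal.ofReal 2) μ := by
      rw [h2]; simpa [Real.norm_eq_abs] using ha.norm
    have hbL : MemLp (fun x => |b x|) (ENNReal.ofReal 2) μ := by
      rw [h2]; simpa [Real.norm_eq_abs] using hb.norm
    have := integral_mul_le_Lp_mul_Lq_of_nonneg hpq
      (Filter.Eventually.of_forall fun x => abs_nonneg (a x))
      (Filter.Eventually.of_forall fun x => abs_nonneg (b x)) haL hbL
    have hconva : (∫ x, |a x| ^ (2:ℝ) ∂μ) = ∫ x, a x ^ 2 ∂μ := by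
      refine integral_congr_ae (Filter.Eventually.of_forall fun x => ?_)
      show |a x| ^ (2:ℝ) = a x ^ 2
      rw [show ((2:ℝ)) = ((2:ℕ):ℝ) by norm_num, Real.rpow_natCast, sq_abs]
    have hconvb : (∫ x, |b x| ^ (2:ℝ) ∂μ) = ∫ x, b x ^ 2 ∂μ := by
      refine integral_congr_ae (Filter.Eventually.of_forall fun x => ?_)
      show |b x| ^ (2:ℝ) = b x ^ 2
      rw [show ((2:ℝ)) = ((2:ℕ):ℝ) by norm_num, Real.rpow_natCast, sq_abs]
    rw [hconva, hconvb] at this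
    rw [Real.sqrt_eq_rpow, Real.sqrt_eq_rpow]
    simpa using this
  have hmono : -(∫ x, a x * b x ∂μ) ≤ ∫ x, |a x| * |b x| ∂μ := by
    rw [← integral_neg]
    apply integral_mono hab.neg (by simpa [abs_mul] using hab.abs)
    intro x
    simp only [Pi.neg_apply]
    rw [← abs_mul]
    exact neg_le_abs _
  calc ∫ x, (a x - b x) ^ 2 ∂μ
      = ∫ x, (a x ^ 2 + b x ^ 2 - 2 * (a x * b x)) ∂μ := by simp_rw [expand]
    _ = (∫ x, a x ^ 2 ∂μ) + (∫ x, b x ^ 2 ∂μ) - 2 * ∫ x, a x * b x ∂μ := by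
        have hsum : Integrable (fun x => a x ^ 2 + b x ^ 2) μ := ha2.add hb2
        rw [integral_sub hsum (hab.const_mul 2), integral_add ha2 hb2,
          integral_const_mul]
    _ ≤ _ := by nlinarith [hCS, hmono]

/-- Proposition 3.2: with `r = f - h`, `h` a fixed measurable version (depending only on
`x_{∼u}`) of `E[f|σ(x_{∼u})]`, `T_u = ‖r‖₂²/‖f-f₀‖₂²` and `δ_u = ‖f - f∘G‖₂²/‖f-f₀‖₂²`,
we have `δ_u ≤ T_u + ‖r∘G‖₂²/‖f-f₀‖₂² + 2 T_u ‖r∘G‖₂/‖r‖₂`. -/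
theorem delta_upper_bound
    {p : ℕ} (hp : 1 ≤ p) (Ω : Fin p → Type*) [∀ i, MeasurableSpace (Ω i)]
    (μ : Measure (∀ i, Ω i)) [IsProbabilityMeasure μ]
    (f : (∀ i, Ω i) → ℝ) (hf : MemLp f 2 μ)
    (hvar : 0 < fVar μ f)
    (u : Finset (Fin p)) (hu : u.Nonempty)
    (g : (∀ i : {i : Fin p // i ∈ uᶜ}, Ω i) → ∀ i : {i : Fin p // i ∈ u}, Ω i)
    (hg : Measurable g)
    (hfG : MemLp (fun x => f (replaceCoords u g x)) 2 μ)
    -- `h` is a fixed measurable version of `E[f | σ(x_{∼u})]` depending only on `x_{∼u}`: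
    (h : (∀ i, Ω i) → ℝ)
    (hmeas : Measurable[coordSigma Ω uᶜ] h)
    (hver : h =ᵐ[μ] μ[f | coordSigma Ω uᶜ])
    (hrpos : 0 < Real.sqrt (∫ x, (f x - h x) ^ 2 ∂μ)) :
    (∫ x, (f x - f (replaceCoords u g x)) ^ 2 ∂μ) / fVar μ f ≤
      (∫ x, (f x - h x) ^ 2 ∂μ) / fVar μ f
      + (∫ x, (f (replaceCoords u g x) - h (replaceCoords u g x)) ^ 2 ∂μ) / fVar μ f
      + 2 * ((∫ x, (f x - h x) ^ 2 ∂μ) / fVar μ f)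
          * (Real.sqrt (∫ x, (f (replaceCoords u g x) - h (replaceCoords u g x)) ^ 2 ∂μ)
              / Real.sqrt (∫ x, (f x - h x) ^ 2 ∂μ)) := by
  classical
  -- the restriction map to the coordinates outside `u`
  set π : (∀ i, Ω i) → (∀ i : {i : Fin p // i ∈ uᶜ}, Ω i) := fun x j => x j with hπdef
  have hm : coordSigma Ω uᶜ ≤ MeasurableSpace.pi := by
    refine iSup_le fun i => iSup_le fun hi => ?_
    exact measurable_iff_comap_le.mp (measurable_pi_apply i)
  have hle : coordSigma Ω uᶜ ≤ MeasurableSpace.comap π MeasurableSpace.pi := by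
    refine iSup_le fun i => iSup_le fun hi => ?_
    have heq : (fun x : ∀ j, Ω j => x i)
        = (fun y : ∀ j : {j : Fin p // j ∈ uᶜ}, Ω j => y ⟨i, hi⟩) ∘ π := rfl
    rw [heq, ← MeasurableSpace.comap_comp]
    exact MeasurableSpace.comap_mono (measurable_iff_comap_le.mp (measurable_pi_apply _))
  -- `h` is unchanged by `G` since `G` preserves the coordinates outside `u`
  have hGh : ∀ x, h (replaceCoords u g x) = h x := by
    intro x
    have hs : MeasurableSet[MeasurableSpace.comap π MeasurableSpace.pi] (h ⁻¹' {h x}) :=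
      hle _ (hmeas (measurableSet_singleton (h x)))
    obtain ⟨t, -, ht⟩ := hs
    have hπ : π (replaceCoords u g x) = π x := by
      funext j
      show replaceCoords u g x (j : Fin p) = x (j : Fin p)
      simp only [replaceCoords]
      rw [dif_neg (Finset.mem_compl.mp j.2)]
    have hx : x ∈ π ⁻¹' t := by rw [ht]; exact rfl
    have hGx : replaceCoords u g x ∈ π ⁻¹' t := by
      simp only [Set.mem_preimage, hπ]; exact hx
    rw [ht] at hGx
    exact hGx
  haveI : SigmaFinite (μ.trim hm) := by
    have : IsFiniteMeasure (μ.trim hm) := isFiniteMeasure_trim hm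
    infer_instance
  -- the conditional expectation of `f` is in `L²`
  have hcond : (condExpL2 ℝ ℝ hm (hf.toLp f) : (∀ i, Ω i) → ℝ) =ᵐ[μ] μ[f | coordSigma Ω uᶜ] := by
    refine ae_eq_condExp_of_forall_setIntegral_eq hm (hf.integrable one_le_two) ?_ ?_ ?_
    · intro s hs hμs
      exact integrableOn_condExpL2_of_measure_ne_top hm hμs.ne _
    · intro s hs hμs
      rw [integral_condExpL2_eq_of_fin_meas_real _ hs hμs.ne]
      exact setIntegral_congr_ae (hm s hs)
        ((hf.coeFn_toLp).mono fun x hx _ => hx)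
    · exact lpMeas.aestronglyMeasurable _
  have hh : MemLp h 2 μ :=
    MemLp.ae_eq (hcond.trans hver.symm) (Lp.memLp _)
  have hr : MemLp (fun x => f x - h x) 2 μ := hf.sub hh
  have hrG : MemLp (fun x => f (replaceCoords u g x) - h (replaceCoords u g x)) 2 μ := by
    have heq : (fun x => f (replaceCoords u g x) - h (replaceCoords u g x))
        = fun x => f (replaceCoords u g x) - h x := by
      funext x; rw [hGh]
    rw [heq]; exact hfG.sub hh
  have hLHS : ∀ x, f x - f (replaceCoords u g x)
      = (f x - h x) - (f (replaceCoords u g x) - h (replaceCoords u g x)) := by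
    intro x; rw [hGh]; ring
  have key : ∫ x, (f x - f (replaceCoords u g x)) ^ 2 ∂μ ≤
      (∫ x, (f x - h x) ^ 2 ∂μ)
      + (∫ x, (f (replaceCoords u g x) - h (replaceCoords u g x)) ^ 2 ∂μ)
      + 2 * Real.sqrt (∫ x, (f x - h x) ^ 2 ∂μ)
          * Real.sqrt (∫ x, (f (replaceCoords u g x) - h (replaceCoords u g x)) ^ 2 ∂μ) := by
    simp_rw [hLHS]
    exact l2_sub_sq_le hr hrG
  set V := fVar μ f with hV
  set A := ∫ x, (f x - h x) ^ 2 ∂μ with hAdef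
  set B := ∫ x, (f (replaceCoords u g x) - h (replaceCoords u g x)) ^ 2 ∂μ with hBdef
  set sA := Real.sqrt A with hsAdef
  set sB := Real.sqrt B with hsBdef
  have hA0 : 0 ≤ A := integral_nonneg fun x => sq_nonneg _
  have hAs : A = sA * sA := (Real.mul_self_sqrt hA0).symm
  have hRHS : A / V + B / V + 2 * (A / V) * (sB / sA) = (A + B + 2 * sA * sB) / V := by
    rw [hAs]
    field_simp
  rw [hRHS]
  gcongr
end

section
/- (Proposition A.1.) For any u ⊆ {1,…,p}, the set M_u = { f ∈ L²(μ) : for every k ∉ u, f does not depend on x_k } is a closed linear subspace of L²(μ). Here f (an equivalence class in L²(μ)) does not depend on x_k means: it has a representative for which there exists N in the product σ-algebra with μ(N) = 0 such that f(x) = f(y) for all x, y ∈ Ω∖N with x_{∼k} = y_{∼k}. -/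
set_option synthInstance.maxHeartbeats 1000000
set_option maxHeartbeats 1000000


open MeasureTheory ProbabilityTheory

/-- A function `f` "does not depend on `x_k`" : there is a null set `N` (in the product
σ-algebra) such that `f x = f y` whenever `x, y ∉ N` agree on all coordinates other than `k`. -/
def NotDependsOn {p : ℕ} {Ω : Fin p → Type*} [∀ i, MeasurableSpace (Ω i)]
    (μ : Measure (∀ i, Ω i)) (f : (∀ i, Ω i) → ℝ) (k : Fin p) : Prop :=
  ∃ N : Set (∀ i, Ω i), MeasurableSet N ∧ μ N = 0 ∧
    ∀ x ∉ N, ∀ y ∉ N, (∀ j, j ≠ k → x j = y j) → f x = f y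

/-- `M_u ⊆ L²(μ)`: the set of (classes of) functions having, for each `k ∉ u`, a
representative which does not depend on `x_k`. -/
def Msub {p : ℕ} {Ω : Fin p → Type*} [∀ i, MeasurableSpace (Ω i)]
    (μ : Measure (∀ i, Ω i)) (u : Finset (Fin p)) : Set (Lp ℝ 2 μ) :=
  {f | ∀ k ∉ u, ∃ f' : (∀ i, Ω i) → ℝ, (f : (∀ i, Ω i) → ℝ) =ᵐ[μ] f' ∧ NotDependsOn μ f' k}

/-- Proposition A.1: `M_u` is a closed linear subspace of `L²(μ)`. -/
theorem Msub_isClosed_submodule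
    {p : ℕ} (hp : 1 ≤ p) (Ω : Fin p → Type*) [∀ i, MeasurableSpace (Ω i)]
    (μ : Measure (∀ i, Ω i)) [IsProbabilityMeasure μ]
    (u : Finset (Fin p)) :
    ∃ S : Submodule ℝ (Lp ℝ 2 μ),
      (S : Set (Lp ℝ 2 μ)) = Msub μ u ∧ IsClosed (S : Set (Lp ℝ 2 μ)) := by
  refine ⟨{ carrier := Msub μ u
            add_mem' := ?_
            zero_mem' := ?_
            smul_mem' := ?_ }, rfl, ?_⟩
  case refine_2 => -- zero
    intro k hk
    refine ⟨fun _ => 0, ?_, ∅, MeasurableSet.empty, measure_empty, ?_⟩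
    · exact Lp.coeFn_zero ℝ 2 μ
    · intro x _ y _ _; rfl
  case refine_1 =>
    rintro f g hf hg k hk
    obtain ⟨f', hff', Nf, hNfm, hNf0, hNf⟩ := hf k hk
    obtain ⟨g', hgg', Ng, hNgm, hNg0, hNg⟩ := hg k hk
    refine ⟨f' + g', ?_, Nf ∪ Ng, hNfm.union hNgm, ?_, ?_⟩
    · filter_upwards [Lp.coeFn_add f g, hff', hgg'] with x h1 h2 h3
      simp only [h1, Pi.add_apply, h2, h3]
    · exact le_antisymm (le_trans (measure_union_le _ _) (by simp [hNf0, hNg0])) zero_le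
    · intro x hx y hy hxy
      simp only [Set.mem_union, not_or] at hx hy
      simp only [Pi.add_apply, hNf x hx.1 y hy.1 hxy, hNg x hx.2 y hy.2 hxy]
  · -- smul
    rintro c f hf k hk
    obtain ⟨f', hff', Nf, hNfm, hNf0, hNf⟩ := hf k hk
    refine ⟨c • f', ?_, Nf, hNfm, hNf0, ?_⟩
    · filter_upwards [Lp.coeFn_smul c f, hff'] with x h1 h2
      simp [h1, h2]
    · intro x hx y hy hxy
      simp only [Pi.smul_apply, hNf x hx y hy hxy]
  · -- closed
    refine IsSeqClosed.isClosed ?_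
    intro fs f hmem hlim
    intro k hk
    choose g' hg' N hNm hN0 hNprop using fun n => hmem n k hk
    have hTIM : MeasureTheory.TendstoInMeasure μ (fun n => (fs n : (∀ i, Ω i) → ℝ))
        Filter.atTop (f : (∀ i, Ω i) → ℝ) :=
      MeasureTheory.tendstoInMeasure_of_tendsto_Lp hlim
    obtain ⟨ns, -, hae⟩ := hTIM.exists_seq_tendsto_ae
    -- a.e. x, for all n, fs n x = g' n x
    have hall : ∀ᵐ x ∂μ, ∀ n, (fs n : (∀ i, Ω i) → ℝ) x = g' n x := by
      rw [MeasureTheory.ae_all_iff]; exact hg'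
    have hconv : ∀ᵐ x ∂μ, Filter.Tendsto (fun i => g' (ns i) x) Filter.atTop
        (nhds ((f : (∀ i, Ω i) → ℝ) x)) := by
      filter_upwards [hae, hall] with x h1 h2
      exact h1.congr (fun i => h2 (ns i))
    set B : Set (∀ i, Ω i) := {x | ¬ Filter.Tendsto (fun i => g' (ns i) x) Filter.atTop
        (nhds ((f : (∀ i, Ω i) → ℝ) x))}
    have hB : μ B = 0 := hconv
    set E := toMeasurable μ B with hE
    have hE0 : μ E = 0 := by rw [hE, measure_toMeasurable]; exact hB
    refine ⟨(f : (∀ i, Ω i) → ℝ), Filter.EventuallyEq.rfl,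
      E ∪ ⋃ n, N n, (measurableSet_toMeasurable μ B).union (MeasurableSet.iUnion hNm), ?_, ?_⟩
    · refine le_antisymm (le_trans (measure_union_le _ _) ?_) zero_le
      rw [hE0, measure_iUnion_null hN0]; simp
    · intro x hx y hy hxy
      simp only [Set.mem_union, Set.mem_iUnion, not_or, not_exists] at hx hy
      have hxB : x ∉ B := fun h => hx.1 (subset_toMeasurable μ B h)
      have hyB : y ∉ B := fun h => hy.1 (subset_toMeasurable μ B h)
      simp only [B, Set.mem_setOf_eq, not_not] at hxB hyB
      have heq : ∀ i, g' (ns i) x = g' (ns i) y :=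
        fun i => hNprop (ns i) x (hx.2 (ns i)) y (hy.2 (ns i)) hxy
      exact tendsto_nhds_unique (hxB.congr heq) hyB
end

section
/- (Example 1.1.) Let ρ ∈ (0,1) and let μ be the law on ℝ² of (Z₁, ρZ₁ + √(1−ρ²) Z₂), where Z₁, Z₂ are independent standard normal random variables, so that the coordinates x₁, x₂ are jointly normal with mean 0, variance 1 and covariance ρ. Let f(x₁,x₂) = x₁ + x₂. Then the decomposition components are f₁ = (1+ρ)x₁, f₂ = (1+ρ)x₂ and f_{1,2} = −ρ(x₁+x₂) (each equality μ-almost everywhere), and the Sobol' indices are S_{{1}} = S_{{2}} = (1+ρ)/2 and S_{{1,2}} = −ρ; in particular S_{{1,2}} < 0. -/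
open MeasureTheory ProbabilityTheory Real
open scoped ENNReal NNReal

/-- The law on `ℝ²` of `(Z₁, ρ Z₁ + √(1-ρ²) Z₂)` with `Z₁, Z₂` independent standard
normals: a jointly normal pair with mean `0`, variance `1` and covariance `ρ`. -/
noncomputable def jointNormal (ρ : ℝ) : Measure (ℝ × ℝ) :=
  Measure.map (fun z : ℝ × ℝ => (z.1, ρ * z.1 + Real.sqrt (1 - ρ ^ 2) * z.2))
    ((gaussianReal 0 1).prod (gaussianReal 0 1))

noncomputable def stdφ (x : ℝ) : ℝ := (Real.sqrt (2 * π))⁻¹ * Real.exp (-2⁻¹ * x ^ 2)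

lemma stdφ_nonneg (x : ℝ) : 0 ≤ stdφ x := by
  unfold stdφ; positivity

lemma stdφ_cont : Continuous stdφ := by
  unfold stdφ; continuity

lemma gaussianReal_eq :
    gaussianReal 0 1 = volume.withDensity fun x => ((stdφ x).toNNReal : ℝ≥0∞) := by
  rw [gaussianReal_of_var_ne_zero _ one_ne_zero]
  congr 1
  funext x
  rw [gaussianPDF_def]
  have h : gaussianPDFReal 0 1 x = stdφ x := by
    unfold gaussianPDFReal stdφ
    push_cast
    ring_nf
  show ENNReal.ofReal (gaussianPDFReal 0 1 x) = _
  rw [h, ENNReal.ofReal_eq_coe_nnreal (stdφ_nonneg x)]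
  congr 1
  simp [Real.toNNReal, NNReal.coe_mk, stdφ_nonneg x, max_eq_left]

lemma integral_stdP (g : ℝ → ℝ) :
    ∫ x, g x ∂(gaussianReal 0 1) = ∫ x, stdφ x * g x := by
  rw [gaussianReal_eq, integral_withDensity_eq_integral_smul
    (stdφ_cont.measurable.real_toNNReal)]
  congr 1; funext x
  simp [NNReal.smul_def, Real.coe_toNNReal _ (stdφ_nonneg x)]

lemma integrable_stdP_iff (g : ℝ → ℝ) :
    Integrable g (gaussianReal 0 1) ↔ Integrable (fun x => stdφ x * g x) := by
  rw [gaussianReal_eq, integrable_withDensity_iff_integrable_smul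
    (stdφ_cont.measurable.real_toNNReal)]
  constructor <;> intro h <;> refine h.congr (Filter.Eventually.of_forall fun x => ?_) <;>
    simp [NNReal.smul_def, Real.coe_toNNReal _ (stdφ_nonneg x)]

lemma integrable_id_stdP : Integrable (fun x : ℝ => x) (gaussianReal 0 1) := by
  rw [integrable_stdP_iff]
  have h := (integrable_mul_exp_neg_mul_sq (b := 2⁻¹) (by norm_num)).const_mul
    ((Real.sqrt (2 * π))⁻¹)
  refine h.congr (Filter.Eventually.of_forall fun x => ?_)
  unfold stdφ; ring

lemma integrable_sq_stdP : Integrable (fun x : ℝ => x ^ 2) (gaussianReal 0 1) := by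
  rw [integrable_stdP_iff]
  have h0 := integrable_rpow_mul_exp_neg_mul_sq (b := 2⁻¹) (by norm_num) (s := 2)
    (by norm_num)
  rw [show (2:ℝ) = ((2:ℕ):ℝ) from by norm_num] at h0
  simp only [Real.rpow_natCast] at h0
  have h := h0.const_mul ((Real.sqrt (2 * π))⁻¹)
  refine h.congr (Filter.Eventually.of_forall fun x => ?_)
  unfold stdφ; push_cast; ring

lemma integral_id_stdP : ∫ x, x ∂(gaussianReal 0 1) = 0 := by
  rw [integral_stdP]
  have h := MeasureTheory.integral_neg_eq_self (fun x => stdφ x * x) (volume : Measure ℝ)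
  have h2 : ∫ x, stdφ (-x) * (-x) = - ∫ x, stdφ x * x := by
    rw [← integral_neg]
    congr 1; funext x
    have : stdφ (-x) = stdφ x := by unfold stdφ; ring_nf
    rw [this]; ring
  rw [h2] at h
  linarith

lemma integral_sq_stdP : ∫ x, x ^ 2 ∂(gaussianReal 0 1) = 1 := by
  rw [integral_stdP]
  have hsplit : ∫ x, stdφ x * x ^ 2 =
      (Real.sqrt (2 * π))⁻¹ * ∫ x, x ^ 2 * Real.exp (-2⁻¹ * x ^ 2) := by
    rw [← integral_const_mul]
    congr 1; funext x; unfold stdφ; ring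
  rw [hsplit]
  have habs : ∫ x, x ^ 2 * Real.exp (-2⁻¹ * x ^ 2) =
      2 * ∫ x in Set.Ioi (0:ℝ), x ^ 2 * Real.exp (-2⁻¹ * x ^ 2) := by
    rw [← integral_comp_abs (f := fun x => x ^ 2 * Real.exp (-2⁻¹ * x ^ 2))]
    congr 1; funext x; rw [sq_abs]
  have key := integral_rpow_mul_exp_neg_mul_rpow (p := 2) (q := 2) (b := 2⁻¹)
    (by norm_num) (by norm_num) (by norm_num)
  have hconv : ∫ x in Set.Ioi (0:ℝ), x ^ (2:ℝ) * Real.exp (-2⁻¹ * x ^ (2:ℝ)) =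
      ∫ x in Set.Ioi (0:ℝ), x ^ 2 * Real.exp (-2⁻¹ * x ^ 2) := by
    congr 1; funext x
    rw [show (2:ℝ) = ((2:ℕ):ℝ) from by norm_num, Real.rpow_natCast]
  rw [hconv] at key
  rw [habs, key]
  have hG : Real.Gamma ((2 + 1) / 2) = 2⁻¹ * Real.sqrt π := by
    rw [show ((2:ℝ) + 1) / 2 = 1/2 + 1 by norm_num, Real.Gamma_add_one (by norm_num),
      Real.Gamma_one_half_eq]
    norm_num
  have hpow : (2⁻¹ : ℝ) ^ (-(2 + 1) / 2 : ℝ) = 2 * Real.sqrt 2 := by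
    rw [show (-(2 + 1) / 2 : ℝ) = -(3/2) by norm_num, Real.rpow_neg (by norm_num),
      Real.inv_rpow (by norm_num), inv_inv,
      show (3/2 : ℝ) = 1 + 1/2 by norm_num, Real.rpow_add (by norm_num),
      Real.rpow_one, ← Real.sqrt_eq_rpow]
  rw [hG, hpow, Real.sqrt_mul (by norm_num)]
  have h2 : Real.sqrt 2 > 0 := Real.sqrt_pos.mpr (by norm_num)
  have hπ : Real.sqrt π > 0 := Real.sqrt_pos.mpr Real.pi_pos
  field_simp

lemma map_rot_volume (ρ : ℝ) (h1 : ρ ^ 2 + (Real.sqrt (1 - ρ ^ 2)) ^ 2 = 1) :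
    Measure.map (fun z : ℝ × ℝ =>
        (ρ * z.1 + Real.sqrt (1 - ρ ^ 2) * z.2, Real.sqrt (1 - ρ ^ 2) * z.1 - ρ * z.2))
      ((volume : Measure ℝ).prod volume) = (volume : Measure ℝ).prod volume := by
  set c := Real.sqrt (1 - ρ ^ 2) with hc
  set S : ℝ × ℝ → ℝ × ℝ := fun z => (ρ * z.1 + c * z.2, c * z.1 - ρ * z.2) with hS
  have hS_meas : Measurable S := by fun_prop
  set M : Matrix (Fin 2) (Fin 2) ℝ := !![ρ, c; c, -ρ] with hM
  have hdet : M.det = -1 := by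
    rw [hM, Matrix.det_fin_two_of]
    linear_combination -h1
  have hMcont : Continuous (Matrix.toLin' M) := LinearMap.continuous_of_finiteDimensional _
  have hMvol : Measure.map (Matrix.toLin' M) (volume : Measure (Fin 2 → ℝ)) = volume := by
    rw [Real.map_matrix_volume_pi_eq_smul_volume_pi (by rw [hdet]; norm_num), hdet]
    norm_num
  have hfin := measurePreserving_finTwoArrow (volume : Measure ℝ)
  set e := (MeasurableEquiv.finTwoArrow : (Fin 2 → ℝ) ≃ᵐ ℝ × ℝ) with he
  have hmap_e : Measure.map e (Measure.pi fun _ : Fin 2 => (volume : Measure ℝ)) =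
      (volume : Measure ℝ).prod volume := hfin.map_eq
  have hpi : (Measure.pi fun _ : Fin 2 => (volume : Measure ℝ)) =
      (volume : Measure (Fin 2 → ℝ)) := (volume_pi).symm
  have hcomp : S ∘ e = e ∘ (Matrix.toLin' M) := by
    funext x
    simp only [Function.comp_apply, he, MeasurableEquiv.finTwoArrow_apply, hS,
      Matrix.toLin'_apply, Matrix.mulVec, dotProduct, Fin.sum_univ_two, hM,
      Matrix.of_apply, Matrix.cons_val', Matrix.cons_val_zero, Matrix.cons_val_one,
      Matrix.head_cons, Matrix.empty_val', Matrix.cons_val_fin_one, Matrix.head_fin_const]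
    rw [Prod.ext_iff]
    constructor <;> ring
  calc Measure.map S ((volume : Measure ℝ).prod volume)
      = Measure.map S (Measure.map e (Measure.pi fun _ : Fin 2 => volume)) := by rw [hmap_e]
    _ = Measure.map (S ∘ e) (Measure.pi fun _ : Fin 2 => volume) := by
        rw [Measure.map_map hS_meas e.measurable]
    _ = Measure.map (e ∘ (Matrix.toLin' M)) (Measure.pi fun _ : Fin 2 => volume) := by
        rw [hcomp]
    _ = Measure.map e (Measure.map (Matrix.toLin' M) (Measure.pi fun _ : Fin 2 => volume)) := by
        rw [Measure.map_map e.measurable hMcont.measurable]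
    _ = (volume : Measure ℝ).prod volume := by rw [hpi, hMvol, ← hpi, hmap_e]

lemma prod_stdP_eq :
    (gaussianReal 0 1).prod (gaussianReal 0 1) =
      ((volume : Measure ℝ).prod volume).withDensity
        (fun z => ENNReal.ofReal (stdφ z.1) * ENNReal.ofReal (stdφ z.2)) := by
  have hφmeas : Measurable fun x : ℝ => ENNReal.ofReal (stdφ x) :=
    stdφ_cont.measurable.ennreal_ofReal
  have hone : gaussianReal 0 1 = volume.withDensity fun x => ENNReal.ofReal (stdφ x) := by
    rw [gaussianReal_eq]; rfl
  refine Measure.prod_eq fun s t hs ht => ?_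
  rw [withDensity_apply _ (hs.prod ht), ← Measure.prod_restrict,
    lintegral_prod_mul (hφmeas.aemeasurable) (hφmeas.aemeasurable),
    hone, withDensity_apply _ hs, withDensity_apply _ ht]

lemma map_S_stdPP (ρ : ℝ) (h1 : ρ ^ 2 + (Real.sqrt (1 - ρ ^ 2)) ^ 2 = 1) :
    Measure.map (fun z : ℝ × ℝ =>
        (ρ * z.1 + Real.sqrt (1 - ρ ^ 2) * z.2, Real.sqrt (1 - ρ ^ 2) * z.1 - ρ * z.2))
      ((gaussianReal 0 1).prod (gaussianReal 0 1)) =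
      (gaussianReal 0 1).prod (gaussianReal 0 1) := by
  set c := Real.sqrt (1 - ρ ^ 2) with hc
  set S : ℝ × ℝ → ℝ × ℝ := fun z => (ρ * z.1 + c * z.2, c * z.1 - ρ * z.2) with hS
  have hS_meas : Measurable S := by fun_prop
  set G : ℝ × ℝ → ℝ≥0∞ := fun z => ENNReal.ofReal (stdφ z.1) * ENNReal.ofReal (stdφ z.2)
    with hG
  have hGmeas : Measurable G :=
    (stdφ_cont.measurable.ennreal_ofReal.comp measurable_fst).mul
      (stdφ_cont.measurable.ennreal_ofReal.comp measurable_snd)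
  have hGS : ∀ z, G (S z) = G z := by
    intro z
    have hsum : (ρ * z.1 + c * z.2) ^ 2 + (c * z.1 - ρ * z.2) ^ 2 = z.1 ^ 2 + z.2 ^ 2 := by
      linear_combination (z.1 ^ 2 + z.2 ^ 2) * h1
    have hr : stdφ (ρ * z.1 + c * z.2) * stdφ (c * z.1 - ρ * z.2) = stdφ z.1 * stdφ z.2 := by
      unfold stdφ
      rw [mul_mul_mul_comm, ← Real.exp_add, mul_mul_mul_comm, ← Real.exp_add]
      congr 1
      exact congrArg Real.exp (by linear_combination (-2⁻¹ : ℝ) * hsum)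
    simp only [hG, hS]
    rw [← ENNReal.ofReal_mul (stdφ_nonneg _), ← ENNReal.ofReal_mul (stdφ_nonneg _)]
    exact congrArg _ hr
  refine Measure.ext fun E hE => ?_
  rw [Measure.map_apply hS_meas hE, prod_stdP_eq]
  show (((volume : Measure ℝ).prod volume).withDensity G) (S ⁻¹' E) =
    (((volume : Measure ℝ).prod volume).withDensity G) E
  rw [withDensity_apply _ (hS_meas hE), withDensity_apply _ hE,
    ← lintegral_indicator (hS_meas hE) G, ← lintegral_indicator hE G]
  have hind : ∀ z, (S ⁻¹' E).indicator G z = (E.indicator G) (S z) := by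
    intro z
    by_cases h : S z ∈ E <;> simp [Set.indicator, h, hGS]
  calc ∫⁻ z, (S ⁻¹' E).indicator G z ∂((volume : Measure ℝ).prod volume)
      = ∫⁻ z, (E.indicator G) (S z) ∂((volume : Measure ℝ).prod volume) := by
        simp_rw [hind]
    _ = ∫⁻ y, (E.indicator G) y ∂(Measure.map S ((volume : Measure ℝ).prod volume)) :=
        (lintegral_map (hGmeas.indicator hE) hS_meas).symm
    _ = ∫⁻ y, (E.indicator G) y ∂((volume : Measure ℝ).prod volume) := by
        rw [map_rot_volume ρ h1]

section PPfacts

local notation "P" => gaussianReal (0:ℝ) (1:ℝ≥0)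
local notation "PP" => Measure.prod (gaussianReal (0:ℝ) (1:ℝ≥0)) (gaussianReal (0:ℝ) (1:ℝ≥0))

lemma I_one : Integrable (fun _ : ℝ => (1:ℝ)) P := integrable_const 1

lemma I_fst : Integrable (fun z : ℝ × ℝ => z.1) PP := by
  have := integrable_id_stdP.mul_prod I_one
  simpa using this

lemma I_snd : Integrable (fun z : ℝ × ℝ => z.2) PP := by
  have := I_one.mul_prod integrable_id_stdP
  simpa using this

lemma I_fst_sq : Integrable (fun z : ℝ × ℝ => z.1 ^ 2) PP := by
  have := integrable_sq_stdP.mul_prod I_one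
  simpa using this

lemma I_snd_sq : Integrable (fun z : ℝ × ℝ => z.2 ^ 2) PP := by
  have := I_one.mul_prod integrable_sq_stdP
  simpa using this

lemma I_mul : Integrable (fun z : ℝ × ℝ => z.1 * z.2) PP :=
  integrable_id_stdP.mul_prod integrable_id_stdP

lemma J_fst : ∫ z : ℝ × ℝ, z.1 ∂PP = 0 := by
  have := integral_prod_mul (μ := P) (ν := P) (fun a : ℝ => a) (fun _ : ℝ => (1:ℝ))
  simpa [integral_id_stdP] using this

lemma J_snd : ∫ z : ℝ × ℝ, z.2 ∂PP = 0 := by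
  have := integral_prod_mul (μ := P) (ν := P) (fun _ : ℝ => (1:ℝ)) (fun a : ℝ => a)
  simpa [integral_id_stdP] using this

lemma J_fst_sq : ∫ z : ℝ × ℝ, z.1 ^ 2 ∂PP = 1 := by
  have := integral_prod_mul (μ := P) (ν := P) (fun a : ℝ => a ^ 2) (fun _ : ℝ => (1:ℝ))
  simpa [integral_sq_stdP] using this

lemma J_snd_sq : ∫ z : ℝ × ℝ, z.2 ^ 2 ∂PP = 1 := by
  have := integral_prod_mul (μ := P) (ν := P) (fun _ : ℝ => (1:ℝ)) (fun a : ℝ => a ^ 2)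
  simpa [integral_sq_stdP] using this

lemma J_mul : ∫ z : ℝ × ℝ, z.1 * z.2 ∂PP = 0 := by
  have := integral_prod_mul (μ := P) (ν := P) (fun a : ℝ => a) (fun a : ℝ => a)
  simpa [integral_id_stdP] using this

end PPfacts

lemma condexp_fst (ρ : ℝ) (hρ : ρ ∈ Set.Ioo (0:ℝ) 1) :
    (fun x : ℝ × ℝ => (1 + ρ) * x.1) =ᵐ[jointNormal ρ]
      (jointNormal ρ)[(fun x : ℝ × ℝ => x.1 + x.2) |
        MeasurableSpace.comap Prod.fst (inferInstance : MeasurableSpace ℝ)] := by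
  have hc2 : Real.sqrt (1 - ρ ^ 2) ^ 2 = 1 - ρ ^ 2 :=
    Real.sq_sqrt (by nlinarith [hρ.1, hρ.2])
  set c := Real.sqrt (1 - ρ ^ 2) with hcdef
  set T : ℝ × ℝ → ℝ × ℝ := fun z => (z.1, ρ * z.1 + c * z.2) with hTdef
  have hTm : Measurable T := by fun_prop
  have hμdef : jointNormal ρ =
      Measure.map T (Measure.prod (gaussianReal 0 1) (gaussianReal 0 1)) := rfl
  haveI : IsProbabilityMeasure (jointNormal ρ) := by
    rw [hμdef]; exact Measure.isProbabilityMeasure_map hTm.aemeasurable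
  have hm1 : MeasurableSpace.comap (Prod.fst : ℝ × ℝ → ℝ) inferInstance ≤
      (inferInstance : MeasurableSpace (ℝ × ℝ)) := measurable_fst.comap_le
  have hfc : Continuous fun x : ℝ × ℝ => x.1 + x.2 := by fun_prop
  have hgc : Continuous fun x : ℝ × ℝ => (1 + ρ) * x.1 := by fun_prop
  have hfT : Integrable (fun z : ℝ × ℝ => (1 + ρ) * z.1 + c * z.2)
      (Measure.prod (gaussianReal 0 1) (gaussianReal 0 1)) :=
    (I_fst.const_mul _).add (I_snd.const_mul _)
  have hf_int : Integrable (fun x : ℝ × ℝ => x.1 + x.2) (jointNormal ρ) := by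
    rw [hμdef, integrable_map_measure hfc.aestronglyMeasurable hTm.aemeasurable]
    refine hfT.congr (Filter.Eventually.of_forall fun z => ?_)
    simp [hTdef, Function.comp]; ring
  have hg_int : Integrable (fun x : ℝ × ℝ => (1 + ρ) * x.1) (jointNormal ρ) := by
    rw [hμdef, integrable_map_measure hgc.aestronglyMeasurable hTm.aemeasurable]
    exact (I_fst.const_mul _).congr (Filter.Eventually.of_forall fun z => rfl)
  refine ae_eq_condExp_of_forall_setIntegral_eq hm1 hf_int
    (fun s _ _ => hg_int.integrableOn) ?_ ?_
  · rintro s ⟨A, hA, rfl⟩ -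
    have hsm : MeasurableSet (Prod.fst ⁻¹' A : Set (ℝ × ℝ)) := hA.preimage measurable_fst
    rw [hμdef, setIntegral_map hsm hgc.aestronglyMeasurable hTm.aemeasurable,
      setIntegral_map hsm hfc.aestronglyMeasurable hTm.aemeasurable]
    have hpre : T ⁻¹' (Prod.fst ⁻¹' A) = Prod.fst ⁻¹' A := rfl
    rw [hpre]
    have hzero : ∫ z in (Prod.fst ⁻¹' A : Set (ℝ × ℝ)), c * z.2
        ∂(Measure.prod (gaussianReal 0 1) (gaussianReal 0 1)) = 0 := by
      rw [show (Prod.fst ⁻¹' A : Set (ℝ × ℝ)) = A ×ˢ Set.univ from (Set.prod_univ).symm,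
        ← Measure.prod_restrict, Measure.restrict_univ]
      have := integral_prod_mul (μ := (gaussianReal 0 1).restrict A) (ν := gaussianReal 0 1)
        (fun _ : ℝ => (1:ℝ)) (fun b : ℝ => c * b)
      simp only [one_mul] at this
      rw [this, integral_const_mul, integral_id_stdP]
      simp
    have hsplit : ∫ z in (Prod.fst ⁻¹' A : Set (ℝ × ℝ)), ((T z).1 + (T z).2)
        ∂(Measure.prod (gaussianReal 0 1) (gaussianReal 0 1))
        = (∫ z in (Prod.fst ⁻¹' A : Set (ℝ × ℝ)), (1 + ρ) * (T z).1
            ∂(Measure.prod (gaussianReal 0 1) (gaussianReal 0 1)))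
          + ∫ z in (Prod.fst ⁻¹' A : Set (ℝ × ℝ)), c * z.2
            ∂(Measure.prod (gaussianReal 0 1) (gaussianReal 0 1)) := by
      rw [← integral_add ((I_fst.const_mul _).integrableOn) ((I_snd.const_mul _).integrableOn)]
      refine setIntegral_congr_fun hsm fun z _ => ?_
      simp [hTdef]; ring
    rw [hsplit, hzero, add_zero]
  · refine StronglyMeasurable.aestronglyMeasurable ?_
    have hfst : Measurable[MeasurableSpace.comap Prod.fst inferInstance]
        (Prod.fst : ℝ × ℝ → ℝ) := fun s hs => ⟨s, hs, rfl⟩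
    exact ((measurable_id.const_mul (1 + ρ)).comp hfst).stronglyMeasurable

lemma condexp_snd (ρ : ℝ) (hρ : ρ ∈ Set.Ioo (0:ℝ) 1) :
    (fun x : ℝ × ℝ => (1 + ρ) * x.2) =ᵐ[jointNormal ρ]
      (jointNormal ρ)[(fun x : ℝ × ℝ => x.1 + x.2) |
        MeasurableSpace.comap Prod.snd (inferInstance : MeasurableSpace ℝ)] := by
  have hc2 : Real.sqrt (1 - ρ ^ 2) ^ 2 = 1 - ρ ^ 2 :=
    Real.sq_sqrt (by nlinarith [hρ.1, hρ.2])
  set c := Real.sqrt (1 - ρ ^ 2) with hcdef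
  have h1 : ρ ^ 2 + c ^ 2 = 1 := by rw [hc2]; ring
  set T : ℝ × ℝ → ℝ × ℝ := fun z => (z.1, ρ * z.1 + c * z.2) with hTdef
  set S : ℝ × ℝ → ℝ × ℝ := fun z => (ρ * z.1 + c * z.2, c * z.1 - ρ * z.2) with hSdef
  have hTm : Measurable T := by fun_prop
  have hSm : Measurable S := by fun_prop
  have hmapS : Measure.map S (Measure.prod (gaussianReal 0 1) (gaussianReal 0 1)) =
      Measure.prod (gaussianReal 0 1) (gaussianReal 0 1) := by
    rw [hSdef, hcdef]
    exact map_S_stdPP ρ (by rw [← hcdef]; exact h1)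
  have hμdef : jointNormal ρ =
      Measure.map T (Measure.prod (gaussianReal 0 1) (gaussianReal 0 1)) := rfl
  haveI : IsProbabilityMeasure (jointNormal ρ) := by
    rw [hμdef]; exact Measure.isProbabilityMeasure_map hTm.aemeasurable
  have hm2 : MeasurableSpace.comap (Prod.snd : ℝ × ℝ → ℝ) inferInstance ≤
      (inferInstance : MeasurableSpace (ℝ × ℝ)) := measurable_snd.comap_le
  have hfc : Continuous fun x : ℝ × ℝ => x.1 + x.2 := by fun_prop
  have hgc : Continuous fun x : ℝ × ℝ => (1 + ρ) * x.2 := by fun_prop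
  have hf_int : Integrable (fun x : ℝ × ℝ => x.1 + x.2) (jointNormal ρ) := by
    rw [hμdef, integrable_map_measure hfc.aestronglyMeasurable hTm.aemeasurable]
    refine ((I_fst.const_mul (1 + ρ)).add (I_snd.const_mul c)).congr
      (Filter.Eventually.of_forall fun z => ?_)
    simp [hTdef, Function.comp]; ring
  have hg_int : Integrable (fun x : ℝ × ℝ => (1 + ρ) * x.2) (jointNormal ρ) := by
    rw [hμdef, integrable_map_measure hgc.aestronglyMeasurable hTm.aemeasurable]
    refine ((I_fst.const_mul ((1 + ρ) * ρ)).add (I_snd.const_mul ((1 + ρ) * c))).congr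
      (Filter.Eventually.of_forall fun z => ?_)
    simp [hTdef, Function.comp]; ring
  -- the key integral identity over B-cylinders
  have key : ∀ B : Set ℝ, MeasurableSet B →
      ∫ x in (Prod.snd ⁻¹' B : Set (ℝ × ℝ)), (1 + ρ) * x.2 ∂(jointNormal ρ) =
      ∫ x in (Prod.snd ⁻¹' B : Set (ℝ × ℝ)), (x.1 + x.2) ∂(jointNormal ρ) := by
    intro B hB
    have hsm : MeasurableSet (Prod.snd ⁻¹' B : Set (ℝ × ℝ)) := hB.preimage measurable_snd
    have hEm : MeasurableSet (Prod.fst ⁻¹' B : Set (ℝ × ℝ)) := hB.preimage measurable_fst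
    rw [hμdef, setIntegral_map hsm hgc.aestronglyMeasurable hTm.aemeasurable,
      setIntegral_map hsm hfc.aestronglyMeasurable hTm.aemeasurable]
    have hpre : T ⁻¹' (Prod.snd ⁻¹' B) = S ⁻¹' (Prod.fst ⁻¹' B) := rfl
    rw [hpre]
    have hh1c : Continuous fun y : ℝ × ℝ => (1 + ρ) * y.1 + c * y.2 := by fun_prop
    have hh2c : Continuous fun y : ℝ × ℝ => (1 + ρ) * y.1 := by fun_prop
    -- rewrite both integrands as compositions with S
    have e1 : ∫ z in S ⁻¹' (Prod.fst ⁻¹' B), ((T z).1 + (T z).2)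
          ∂(Measure.prod (gaussianReal 0 1) (gaussianReal 0 1))
        = ∫ z in S ⁻¹' (Prod.fst ⁻¹' B), ((1 + ρ) * (S z).1 + c * (S z).2)
          ∂(Measure.prod (gaussianReal 0 1) (gaussianReal 0 1)) := by
      refine setIntegral_congr_fun (hSm hEm) fun z _ => ?_
      simp only [hTdef, hSdef]
      linear_combination (-z.1) * hc2
    have e2 : ∫ z in S ⁻¹' (Prod.fst ⁻¹' B), ((1 + ρ) * (T z).2)
          ∂(Measure.prod (gaussianReal 0 1) (gaussianReal 0 1))
        = ∫ z in S ⁻¹' (Prod.fst ⁻¹' B), ((1 + ρ) * (S z).1)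
          ∂(Measure.prod (gaussianReal 0 1) (gaussianReal 0 1)) := by
      refine setIntegral_congr_fun (hSm hEm) fun z _ => ?_
      simp only [hTdef, hSdef]
    have t1 : ∫ z in S ⁻¹' (Prod.fst ⁻¹' B), ((1 + ρ) * (S z).1 + c * (S z).2)
          ∂(Measure.prod (gaussianReal 0 1) (gaussianReal 0 1))
        = ∫ y in (Prod.fst ⁻¹' B : Set (ℝ × ℝ)), ((1 + ρ) * y.1 + c * y.2)
          ∂(Measure.prod (gaussianReal 0 1) (gaussianReal 0 1)) := by
      rw [← setIntegral_map hEm hh1c.aestronglyMeasurable hSm.aemeasurable, hmapS]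
    have t2 : ∫ z in S ⁻¹' (Prod.fst ⁻¹' B), ((1 + ρ) * (S z).1)
          ∂(Measure.prod (gaussianReal 0 1) (gaussianReal 0 1))
        = ∫ y in (Prod.fst ⁻¹' B : Set (ℝ × ℝ)), ((1 + ρ) * y.1)
          ∂(Measure.prod (gaussianReal 0 1) (gaussianReal 0 1)) := by
      rw [← setIntegral_map hEm hh2c.aestronglyMeasurable hSm.aemeasurable, hmapS]
    have hzero : ∫ y in (Prod.fst ⁻¹' B : Set (ℝ × ℝ)), c * y.2
        ∂(Measure.prod (gaussianReal 0 1) (gaussianReal 0 1)) = 0 := by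
      rw [show (Prod.fst ⁻¹' B : Set (ℝ × ℝ)) = B ×ˢ Set.univ from (Set.prod_univ).symm,
        ← Measure.prod_restrict, Measure.restrict_univ]
      have := integral_prod_mul (μ := (gaussianReal 0 1).restrict B) (ν := gaussianReal 0 1)
        (fun _ : ℝ => (1:ℝ)) (fun b : ℝ => c * b)
      simp only [one_mul] at this
      rw [this, integral_const_mul, integral_id_stdP]
      simp
    have hsplit : ∫ y in (Prod.fst ⁻¹' B : Set (ℝ × ℝ)), ((1 + ρ) * y.1 + c * y.2)
          ∂(Measure.prod (gaussianReal 0 1) (gaussianReal 0 1))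
        = (∫ y in (Prod.fst ⁻¹' B : Set (ℝ × ℝ)), (1 + ρ) * y.1
            ∂(Measure.prod (gaussianReal 0 1) (gaussianReal 0 1)))
          + ∫ y in (Prod.fst ⁻¹' B : Set (ℝ × ℝ)), c * y.2
            ∂(Measure.prod (gaussianReal 0 1) (gaussianReal 0 1)) :=
      integral_add ((I_fst.const_mul _).integrableOn) ((I_snd.const_mul _).integrableOn)
    rw [e1, e2, t1, t2, hsplit, hzero, add_zero]
  refine ae_eq_condExp_of_forall_setIntegral_eq hm2 hf_int
    (fun s _ _ => hg_int.integrableOn) ?_ ?_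
  · rintro s ⟨B, hB, rfl⟩ -
    exact key B hB
  · refine StronglyMeasurable.aestronglyMeasurable ?_
    have hsnd : Measurable[MeasurableSpace.comap Prod.snd inferInstance]
        (Prod.snd : ℝ × ℝ → ℝ) := fun s hs => ⟨s, hs, rfl⟩
    exact ((measurable_id.const_mul (1 + ρ)).comp hsnd).stronglyMeasurable

/-- Example 1.1: for `f(x₁,x₂) = x₁ + x₂` with `(x₁,x₂)` jointly normal (mean 0,
variance 1, covariance `ρ ∈ (0,1)`), the decomposition components are
`f₁ = (1+ρ)x₁`, `f₂ = (1+ρ)x₂`, `f_{1,2} = -ρ(x₁+x₂)` (μ-a.e.), and the Sobol' indices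
are `S₁ = S₂ = (1+ρ)/2` and `S_{1,2} = -ρ < 0`. -/
theorem example_1_1 (ρ : ℝ) (hρ : ρ ∈ Set.Ioo (0 : ℝ) 1)
    (μ : Measure (ℝ × ℝ)) (hμ : μ = jointNormal ρ)
    (f : ℝ × ℝ → ℝ) (hf : f = fun x => x.1 + x.2)
    (f₀ : ℝ) (hf₀ : f₀ = ∫ x, f x ∂μ)
    (f1 f2 f12 : ℝ × ℝ → ℝ)
    (hf1 : f1 = fun x =>
      (μ[f | MeasurableSpace.comap Prod.fst (inferInstance : MeasurableSpace ℝ)]) x - f₀)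
    (hf2 : f2 = fun x =>
      (μ[f | MeasurableSpace.comap Prod.snd (inferInstance : MeasurableSpace ℝ)]) x - f₀)
    (hf12 : f12 = fun x => f x - f1 x - f2 x - f₀) :
    (∀ᵐ x ∂μ, f1 x = (1 + ρ) * x.1) ∧
    (∀ᵐ x ∂μ, f2 x = (1 + ρ) * x.2) ∧
    (∀ᵐ x ∂μ, f12 x = -ρ * (x.1 + x.2)) ∧
    fCov μ f1 f / fVar μ f = (1 + ρ) / 2 ∧
    fCov μ f2 f / fVar μ f = (1 + ρ) / 2 ∧
    fCov μ f12 f / fVar μ f = -ρ ∧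
    fCov μ f12 f / fVar μ f < 0 := by
  have hc2 : Real.sqrt (1 - ρ ^ 2) ^ 2 = 1 - ρ ^ 2 :=
    Real.sq_sqrt (by nlinarith [hρ.1, hρ.2])
  set c := Real.sqrt (1 - ρ ^ 2) with hcdef
  set T : ℝ × ℝ → ℝ × ℝ := fun z => (z.1, ρ * z.1 + c * z.2) with hTdef
  have hTm : Measurable T := by fun_prop
  have hμdef : jointNormal ρ =
      Measure.map T (Measure.prod (gaussianReal 0 1) (gaussianReal 0 1)) := rfl
  -- transfer of integrals
  have trans2 : ∀ (g k : ℝ × ℝ → ℝ), Continuous g → (∀ z, g (T z) = k z) →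
      ∫ x, g x ∂(jointNormal ρ) =
        ∫ z, k z ∂(Measure.prod (gaussianReal 0 1) (gaussianReal 0 1)) := by
    intro g k hg hgk
    rw [hμdef, integral_map hTm.aemeasurable hg.aestronglyMeasurable]
    exact integral_congr_ae (Filter.Eventually.of_forall hgk)
  have Klin : ∀ a b : ℝ, ∫ z : ℝ × ℝ, (a * z.1 + b * z.2)
      ∂(Measure.prod (gaussianReal 0 1) (gaussianReal 0 1)) = 0 := by
    intro a b
    rw [integral_add (I_fst.const_mul a) (I_snd.const_mul b), integral_const_mul,
      integral_const_mul, J_fst, J_snd]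
    ring
  have Ksum : ∀ a b d : ℝ, ∫ z : ℝ × ℝ, (a * z.1 ^ 2 + b * (z.1 * z.2) + d * z.2 ^ 2)
      ∂(Measure.prod (gaussianReal 0 1) (gaussianReal 0 1)) = a + d := by
    intro a b d
    have hab : Integrable (fun z : ℝ × ℝ => a * z.1 ^ 2 + b * (z.1 * z.2))
        (Measure.prod (gaussianReal 0 1) (gaussianReal 0 1)) :=
      (I_fst_sq.const_mul a).add (I_mul.const_mul b)
    rw [integral_add hab (I_snd_sq.const_mul d),
      integral_add (I_fst_sq.const_mul a) (I_mul.const_mul b), integral_const_mul,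
      integral_const_mul, integral_const_mul, J_fst_sq, J_mul, J_snd_sq]
    ring
  -- the concrete integrals
  have hintf : ∫ x, f x ∂μ = 0 := by
    rw [hμ, hf, trans2 (fun x => x.1 + x.2) (fun z => (1 + ρ) * z.1 + c * z.2)
      (by fun_prop) (fun z => by simp only [hTdef]; try ring), Klin]
  have hintx1 : ∫ x : ℝ × ℝ, x.1 ∂μ = 0 := by
    rw [hμ, trans2 (fun x => x.1) (fun z => (1 : ℝ) * z.1 + 0 * z.2)
      (by fun_prop) (fun z => by simp only [hTdef]; try ring), Klin]
  have hintx2 : ∫ x : ℝ × ℝ, x.2 ∂μ = 0 := by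
    rw [hμ, trans2 (fun x => x.2) (fun z => ρ * z.1 + c * z.2)
      (by fun_prop) (fun z => by simp only [hTdef]; try ring), Klin]
  have hintx1f : ∫ x : ℝ × ℝ, x.1 * (x.1 + x.2) ∂μ = 1 + ρ := by
    rw [hμ, trans2 (fun x => x.1 * (x.1 + x.2))
      (fun z => (1 + ρ) * z.1 ^ 2 + c * (z.1 * z.2) + 0 * z.2 ^ 2)
      (by fun_prop) (fun z => by simp only [hTdef]; try ring), Ksum]
    ring
  have hintx2f : ∫ x : ℝ × ℝ, x.2 * (x.1 + x.2) ∂μ = 1 + ρ := by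
    rw [hμ, trans2 (fun x => x.2 * (x.1 + x.2))
      (fun z => (ρ * (1 + ρ)) * z.1 ^ 2 + (ρ * c + c * (1 + ρ)) * (z.1 * z.2) + c ^ 2 * z.2 ^ 2)
      (by fun_prop) (fun z => by simp only [hTdef]; try ring), Ksum]
    rw [hc2]; ring
  have hintff : ∫ x : ℝ × ℝ, (x.1 + x.2) ^ 2 ∂μ = 2 + 2 * ρ := by
    rw [hμ, trans2 (fun x => (x.1 + x.2) ^ 2)
      (fun z => ((1 + ρ) ^ 2) * z.1 ^ 2 + (2 * (1 + ρ) * c) * (z.1 * z.2) + c ^ 2 * z.2 ^ 2)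
      (by fun_prop) (fun z => by simp only [hTdef]; try ring), Ksum]
    rw [hc2]; ring
  have hf₀0 : f₀ = 0 := by rw [hf₀, hintf]
  -- the a.e. identifications
  have h1 : ∀ᵐ x ∂μ, f1 x = (1 + ρ) * x.1 := by
    have hce : (fun x : ℝ × ℝ => (1 + ρ) * x.1) =ᵐ[μ]
        μ[f | MeasurableSpace.comap Prod.fst (inferInstance : MeasurableSpace ℝ)] := by
      rw [hμ, hf]; exact condexp_fst ρ hρ
    filter_upwards [hce.symm] with x hx
    rw [hf1]
    simp only [hf₀0, sub_zero]
    exact hx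
  have h2 : ∀ᵐ x ∂μ, f2 x = (1 + ρ) * x.2 := by
    have hce : (fun x : ℝ × ℝ => (1 + ρ) * x.2) =ᵐ[μ]
        μ[f | MeasurableSpace.comap Prod.snd (inferInstance : MeasurableSpace ℝ)] := by
      rw [hμ, hf]; exact condexp_snd ρ hρ
    filter_upwards [hce.symm] with x hx
    rw [hf2]
    simp only [hf₀0, sub_zero]
    exact hx
  have h12 : ∀ᵐ x ∂μ, f12 x = -ρ * (x.1 + x.2) := by
    filter_upwards [h1, h2] with x hx1 hx2
    simp only [hf12, hf, hf₀0, hx1, hx2]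
    ring
  -- means
  have hm1 : ∫ x, f1 x ∂μ = 0 := by
    rw [integral_congr_ae (h1 : f1 =ᵐ[μ] fun x => (1 + ρ) * x.1), integral_const_mul, hintx1,
      mul_zero]
  have hm2 : ∫ x, f2 x ∂μ = 0 := by
    rw [integral_congr_ae (h2 : f2 =ᵐ[μ] fun x => (1 + ρ) * x.2), integral_const_mul, hintx2,
      mul_zero]
  have hm12 : ∫ x, f12 x ∂μ = 0 := by
    rw [integral_congr_ae (h12 : f12 =ᵐ[μ] fun x => -ρ * (x.1 + x.2)), hμ,
      trans2 (fun x => -ρ * (x.1 + x.2)) (fun z => (-ρ * (1 + ρ)) * z.1 + (-ρ * c) * z.2)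
        (by fun_prop) (fun z => by simp only [hTdef]; try ring), Klin]
  -- variance and covariances
  have hvar : fVar μ f = 2 + 2 * ρ := by
    unfold fVar
    rw [← hf₀, hf₀0]
    simp only [sub_zero, hf]
    exact hintff
  have hcov1 : fCov μ f1 f = (1 + ρ) * (1 + ρ) := by
    unfold fCov
    rw [← hf₀, hf₀0, hm1]
    simp only [sub_zero]
    have heq : (fun x => f1 x * f x) =ᵐ[μ] fun x : ℝ × ℝ => (1 + ρ) * (x.1 * (x.1 + x.2)) := by
      filter_upwards [h1] with x hx
      rw [hx]
      simp only [hf]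
      ring
    rw [integral_congr_ae heq, integral_const_mul, hintx1f]
  have hcov2 : fCov μ f2 f = (1 + ρ) * (1 + ρ) := by
    unfold fCov
    rw [← hf₀, hf₀0, hm2]
    simp only [sub_zero]
    have heq : (fun x => f2 x * f x) =ᵐ[μ] fun x : ℝ × ℝ => (1 + ρ) * (x.2 * (x.1 + x.2)) := by
      filter_upwards [h2] with x hx
      rw [hx]
      simp only [hf]
      ring
    rw [integral_congr_ae heq, integral_const_mul, hintx2f]
  have hcov12 : fCov μ f12 f = -ρ * (2 + 2 * ρ) := by
    unfold fCov
    rw [← hf₀, hf₀0, hm12]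
    simp only [sub_zero]
    have heq : (fun x => f12 x * f x) =ᵐ[μ] fun x : ℝ × ℝ => -ρ * ((x.1 + x.2) ^ 2) := by
      filter_upwards [h12] with x hx
      rw [hx]
      simp only [hf]
      ring
    rw [integral_congr_ae heq, integral_const_mul, hintff]
  have hden : (2 + 2 * ρ : ℝ) ≠ 0 := by nlinarith [hρ.1]
  have hr12 : fCov μ f12 f / fVar μ f = -ρ := by
    rw [hcov12, hvar, mul_div_assoc, div_self hden, mul_one]
  refine ⟨h1, h2, h12, ?_, ?_, hr12, ?_⟩
  · rw [hcov1, hvar]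
    field_simp
  · rw [hcov2, hvar]
    field_simp
  · rw [hr12]
    linarith [hρ.1]
end
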